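/- In the one-agent linear-sequestration economy, for every total net CO2 emission level v∈[0,1], the agent's equilibrium electricity consumption at any fuel tax equilibrium with emission v is at most (1+v)/2, the electricity consumption at the emission tax equilibrium with emission v; the inequality is strict for v∈(0,1). Hence for v∈(0,1) every fuel tax equilibrium with emission v is Pareto dominated by the corresponding emission tax equilibrium. -/

import Mathlib

noncomputable section

/-- Dot product on ℝ³ (as nested pairs). -/
def dot3 (p z : ℝ × ℝ × ℝ) : ℝ := p.1 * z.1 + p.2.1 * z.2.1 + p.2.2 * z.2.2

/-- Consumption set {0} × ℝ≥0² (no consumption of CO2). -/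
def X0 : Set (ℝ × ℝ × ℝ) := {z | z.1 = 0 ∧ 0 ≤ z.2.1 ∧ 0 ≤ z.2.2}

/-- Endowment (0,1,0): one unit of coal. -/
def e0 : ℝ × ℝ × ℝ := (0, 1, 0)

/-- First firm: burn r units of coal to get r units of electricity and r units of CO2. -/
def Y1 : Set (ℝ × ℝ × ℝ) := {y | ∃ r : ℝ, 0 ≤ r ∧ y = (r, -r, r)}

/-- Second firm: use r units of electricity to sequester 2r units of CO2. -/
def Y2 : Set (ℝ × ℝ × ℝ) := {y | ∃ r : ℝ, 0 ≤ r ∧ y = (-(2*r), 0, -r)}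

/-- Total net CO2 emission. -/
def emiss (x y1 y2 : ℝ × ℝ × ℝ) : ℝ := e0.1 + y1.1 + y2.1 - x.1

/-- `V`-compliant fuel tax equilibrium (V = ℝ≤0³) at rate `t` on coal: the normalization
is `t + ‖p‖₁ = 1`; each firm maximizes `p·z + t·z₂` (it pays the tax on its coal
purchases); the agent's budget is endowment value plus firm profits (the tax nets out
with the rebate); and excess demand is ≤ 0 componentwise. -/
def FuelEq (t : ℝ) (x y1 y2 p : ℝ × ℝ × ℝ) : Prop :=
  t + (|p.1| + |p.2.1| + |p.2.2|) = 1 ∧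
  y1 ∈ Y1 ∧ (∀ z ∈ Y1, dot3 p z + t * z.2.1 ≤ dot3 p y1 + t * y1.2.1) ∧
  y2 ∈ Y2 ∧ (∀ z ∈ Y2, dot3 p z + t * z.2.1 ≤ dot3 p y2 + t * y2.2.1) ∧
  x ∈ X0 ∧
  dot3 p x ≤ dot3 p e0 + dot3 p y1 + dot3 p y2 ∧
  (∀ z ∈ X0, dot3 p z ≤ dot3 p e0 + dot3 p y1 + dot3 p y2 → z.2.2 ≤ x.2.2) ∧
  x.1 - e0.1 - y1.1 - y2.1 ≤ 0 ∧
  x.2.1 - e0.2.1 - y1.2.1 - y2.2.1 ≤ 0 ∧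
  x.2.2 - e0.2.2 - y1.2.2 - y2.2.2 ≤ 0

set_option maxHeartbeats 1000000 in
/-- at any fuel tax equilibrium with total net CO2 emission v ∈ [0,1] the
agent's electricity consumption is at most (1+v)/2 — her consumption at the emission tax
equilibrium with emission v — with strict inequality (hence strictly lower utility
c₃ − v²/2, i.e. Pareto domination by the emission tax equilibrium) for v ∈ (0,1). -/
theorem stmt15 (v : ℝ) (hv : v ∈ Set.Icc (0:ℝ) 1) (t : ℝ) (ht : 0 ≤ t)
    (x y1 y2 p : ℝ × ℝ × ℝ) (heq : FuelEq t x y1 y2 p) (hemi : emiss x y1 y2 = v) :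
    x.2.2 ≤ (1+v)/2 ∧
    (v ∈ Set.Ioo (0:ℝ) 1 → x.2.2 < (1+v)/2) ∧
    (v ∈ Set.Ioo (0:ℝ) 1 → x.2.2 - v^2/2 < (1+v)/2 - v^2/2) := by
  obtain ⟨hv0, hv1⟩ := hv
  obtain ⟨hnorm, hy1, hmax1, hy2, hmax2, hx, hbud, hmono, hcl1, hcl2, hcl3⟩ := heq
  obtain ⟨r, hr0, rfl⟩ := hy1
  obtain ⟨s, hs0, rfl⟩ := hy2
  obtain ⟨hx1, hx2, hx3⟩ := hx
  simp only [emiss, e0] at hemi hcl1 hcl2 hcl3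
  have hrv : r - 2*s = v := by rw [hx1] at hemi; linarith
  have hr1 : r ≤ 1 := by linarith
  have hweak : x.2.2 ≤ (1+v)/2 := by linarith
  have hstrict : v ∈ Set.Ioo (0:ℝ) 1 → x.2.2 < (1+v)/2 := by
    rintro ⟨hv0', hv1'⟩
    rcases eq_or_lt_of_le hs0 with hs | hs
    · linarith
    · -- s > 0 : firm 2 FOC gives p₃ = -2 p₁
      have h20 := hmax2 (0,0,0) ⟨0, le_refl 0, by norm_num⟩
      have h22 := hmax2 (-(2*(2*s)), 0, -(2*s)) ⟨2*s, by linarith, rfl⟩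
      simp only [dot3] at h20 h22
      have hA1 : s * (2*p.1 + p.2.2) ≤ 0 := by nlinarith
      have hA2 : 0 ≤ s * (2*p.1 + p.2.2) := by nlinarith
      have hfoc2 : p.2.2 = -(2*p.1) := by
        rcases mul_eq_zero.mp (le_antisymm hA1 hA2) with h | h
        · linarith
        · linarith
      -- p₃ > 0 by agent monotonicity
      have hp3 : 0 < p.2.2 := by
        by_contra h
        push_neg at h
        have hz : ((0:ℝ), x.2.1, x.2.2 + 1) ∈ X0 :=
          ⟨rfl, hx2, show (0:ℝ) ≤ x.2.2 + 1 by linarith⟩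
        have hb : dot3 p (0, x.2.1, x.2.2 + 1) ≤
            dot3 p e0 + dot3 p (r, -r, r) + dot3 p (-(2*s), 0, -s) := by
          simp only [dot3] at hbud ⊢
          rw [hx1] at hbud
          nlinarith
        have := hmono _ hz hb
        simp only at this
        linarith
      have hp1 : p.1 < 0 := by linarith
      -- p₂ ≥ 0 by agent monotonicity
      have hp2 : 0 ≤ p.2.1 := by
        by_contra h
        push_neg at h
        have hKe : p.2.1 * (-(p.2.2/p.2.1)) = -p.2.2 := by
          field_simp
          rw [neg_inj, div_eq_iff (ne_of_lt h)]
          ring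
        have hK : 0 ≤ -(p.2.2/p.2.1) := by
          have := div_neg_of_pos_of_neg hp3 h
          linarith
        have hz : ((0:ℝ), x.2.1 + -(p.2.2/p.2.1), x.2.2 + 1) ∈ X0 :=
          ⟨rfl, show (0:ℝ) ≤ x.2.1 + -(p.2.2/p.2.1) by linarith,
           show (0:ℝ) ≤ x.2.2 + 1 by linarith⟩
        have hb : dot3 p (0, x.2.1 + -(p.2.2/p.2.1), x.2.2 + 1) ≤
            dot3 p e0 + dot3 p (r, -r, r) + dot3 p (-(2*s), 0, -s) := by
          simp only [dot3] at hbud ⊢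
          rw [hx1] at hbud
          nlinarith [hKe]
        have := hmono _ hz hb
        simp only at this
        linarith
      -- firm 1 FOC
      have hr : 0 < r := by linarith
      have h10 := hmax1 (0,0,0) ⟨0, le_refl 0, by norm_num⟩
      have h12 := hmax1 (2*r, -(2*r), 2*r) ⟨2*r, by linarith, rfl⟩
      simp only [dot3] at h10 h12
      have hB1 : r * (p.1 - p.2.1 + p.2.2 - t) ≤ 0 := by nlinarith
      have hB2 : 0 ≤ r * (p.1 - p.2.1 + p.2.2 - t) := by nlinarith
      have hfoc1 : p.1 - p.2.1 + p.2.2 - t = 0 := by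
        rcases mul_eq_zero.mp (le_antisymm hB1 hB2) with h | h
        · linarith
        · exact h
      -- normalization pins down prices
      rw [abs_of_neg hp1, abs_of_nonneg hp2, abs_of_pos hp3] at hnorm
      have hp1v : p.1 = -(1/4 : ℝ) := by linarith
      have hp3v : p.2.2 = (1/2 : ℝ) := by linarith
      have hp2v : p.2.1 = 1/4 - t := by linarith
      have ht4 : t ≤ 1/4 := by linarith
      -- budget
      simp only [dot3, e0] at hbud
      rw [hx1, hp1v, hp3v, hp2v] at hbud
      norm_num at hbud
      nlinarith [mul_nonneg (by linarith : (0:ℝ) ≤ 1/4 - t) hx2,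
        mul_nonneg ht (by linarith : (0:ℝ) ≤ 1 - r)]
  exact ⟨hweak, hstrict, fun h => by have := hstrict h; linarith⟩
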